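/- Let t be a positive integer, ι an arbitrary (possibly infinite) index type, and F : ι → Finset α a family of finite sets. If for every finite subset S of ι the union ⋃_{i∈S} F_i contains at least t·|S| elements, then the family has a set of distinct t-representatives, i.e., there exist pairwise disjoint sets R_i ⊆ F_i with |R_i| = t for every i ∈ ι. -/
import Mathlib


/-- **Generalized Hall theorem for arbitrary (possibly infinite) families of finite sets.**
If every finite subfamily indexed by `S` has union of size at least `t·|S|`,
then the family has a set of distinct `t`-representatives. -/
theorem stmt1 {α ι : Type*} [DecidableEq α] (t : ℕ) (ht : 0 < t)
    (F : ι → Finset α)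
    (hall : ∀ S : Finset ι, t * S.card ≤ (S.biUnion F).card) :
    ∃ R : ι → Finset α,
      (∀ i, R i ⊆ F i ∧ (R i).card = t) ∧
      ∀ i j, i ≠ j → Disjoint (R i) (R j) := by
  classical
  set F' : ι × Fin t → Finset α := fun p => F p.1 with hF'
  have hall' : ∀ S : Finset (ι × Fin t), S.card ≤ (S.biUnion F').card := by
    intro S
    set S' := S.image Prod.fst with hS'
    have hsub : S ⊆ S' ×ˢ (Finset.univ : Finset (Fin t)) := by
      intro p hp
      simp [hS', Finset.mem_product]
      exact ⟨p.2, hp⟩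
    have h1 : S.card ≤ S'.card * t := by
      calc S.card ≤ (S' ×ˢ (Finset.univ : Finset (Fin t))).card := Finset.card_le_card hsub
        _ = S'.card * t := by simp [Finset.card_product]
    have h2 : S.biUnion F' = S'.biUnion F := by
      ext a
      simp only [Finset.mem_biUnion, hS', Finset.mem_image]
      constructor
      · rintro ⟨p, hp, ha⟩; exact ⟨p.1, ⟨p, hp, rfl⟩, ha⟩
      · rintro ⟨i, ⟨p, hp, rfl⟩, ha⟩; exact ⟨p, hp, ha⟩
    calc S.card ≤ S'.card * t := h1
      _ = t * S'.card := Nat.mul_comm _ _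
      _ ≤ (S'.biUnion F).card := hall S'
      _ = (S.biUnion F').card := by rw [h2]
  obtain ⟨f, hfinj, hfmem⟩ :=
    (Finset.all_card_le_biUnion_card_iff_exists_injective F').mp hall'
  refine ⟨fun i => (Finset.univ : Finset (Fin t)).image (fun k => f (i, k)), ?_, ?_⟩
  · intro i
    constructor
    · intro a ha
      simp only [Finset.mem_image] at ha
      obtain ⟨k, _, rfl⟩ := ha
      exact hfmem (i, k)
    · rw [Finset.card_image_of_injective _ (fun k l h => by
        have := hfinj h; simpa using this)]
      simp
  · intro i j hij
    rw [Finset.disjoint_left]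
    intro a hai haj
    simp only [Finset.mem_image] at hai haj
    obtain ⟨k, _, hk⟩ := hai
    obtain ⟨l, _, hl⟩ := haj
    exact hij (congrArg Prod.fst (hfinj (hk.trans hl.symm)))
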